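/- Let G be a group and let r, s ∈ G be elements that both centralize the commutator subgroup [G,G]. If r² ∈ [G,G], then the commutator [r,s] satisfies [r,s]² = 1. -/
import Mathlib


theorem commutator_sq_eq_one_of_centralizing
    (G : Type*) [Group G] (r s : G)
    (hr : ∀ x ∈ commutator G, Commute r x)
    (hs : ∀ x ∈ commutator G, Commute s x)
    (hr2 : r ^ 2 ∈ commutator G) :
    (r⁻¹ * s⁻¹ * r * s) ^ 2 = 1 := by
  set t := s⁻¹ * r * s with ht
  have hmem : r⁻¹ * s⁻¹ * r * s ∈ commutator G := by
    have := Subgroup.commutator_mem_commutator (Subgroup.mem_top r⁻¹)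
      (Subgroup.mem_top s⁻¹) (H₁ := (⊤ : Subgroup G)) (H₂ := (⊤ : Subgroup G))
    rw [commutator_def]
    simpa [commutatorElement_def, mul_assoc] using this
  have h1 : Commute r (r⁻¹ * t) := by
    have := hr _ hmem
    simpa [ht, mul_assoc] using this
  have hrt : Commute r t := by
    have := (Commute.refl r).mul_right h1
    simpa [← mul_assoc] using this
  have ht2 : t ^ 2 = r ^ 2 := by
    have h2 := (hs _ hr2).eq
    have : t ^ 2 = s⁻¹ * r ^ 2 * s := by
      simp [ht, pow_two]; group
    rw [this, mul_assoc, ← h2]; group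
  have key : (r⁻¹ * t) ^ 2 = r⁻¹ ^ 2 * t ^ 2 := (hrt.inv_left.mul_pow 2)
  have : (r⁻¹ * t) ^ 2 = 1 := by
    rw [key, ht2]; group
  calc (r⁻¹ * s⁻¹ * r * s) ^ 2 = (r⁻¹ * t) ^ 2 := by rw [ht]; group
    _ = 1 := this
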